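/- If a module M fits into a short exact sequence 0 → M → P → M → 0 with P projective and M has finite projective dimension, then M is projective. -/

import Mathlib

open CategoryTheory

noncomputable instance (R : Type) [CommRing R] : HasExt.{1} (ModuleCat.{0} R) :=
  have : HasDerivedCategory.{1} (ModuleCat.{0} R) := HasDerivedCategory.standard _
  hasExt_of_hasDerivedCategory _

/-- `Ext^n_R(M, N) = 0`. -/
def ExtVanish (R : Type) [CommRing R] (M N : Type) [AddCommGroup M] [Module R M]
    [AddCommGroup N] [Module R N] (n : ℕ) : Prop :=
  Subsingleton (Abelian.Ext (ModuleCat.of R M) (ModuleCat.of R N) n)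

/-- Strongly Gorenstein projective (short exact sequence characterization):
there is an exact sequence `0 → M → P → M → 0` with `P` projective, and
`Ext^1_R(M, Q) = 0` for every projective `Q`. -/
def IsSGP (R : Type) [CommRing R] (M : Type) [AddCommGroup M] [Module R M] : Prop :=
  (∃ (P : ModuleCat.{0} R) (i : M →ₗ[R] P) (p : P →ₗ[R] M),
      Module.Projective R P ∧ Function.Injective i ∧ Function.Surjective p ∧
      LinearMap.range i = LinearMap.ker p) ∧
  ∀ Q : ModuleCat.{0} R, Module.Projective R Q → ExtVanish R M Q 1

/-- Strongly Gorenstein projective (complete resolution definition): there is an exact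
complex `⋯ → P →^f P →^f P → ⋯` of projective modules which stays exact after applying
`Hom(-, Q)` for every projective `Q`, with `M ≅ Im f`. -/
def IsSGPComplete (R : Type) [CommRing R] (M : Type) [AddCommGroup M] [Module R M] : Prop :=
  ∃ (P : ModuleCat.{0} R) (f : P →ₗ[R] P),
    Module.Projective R P ∧ LinearMap.range f = LinearMap.ker f ∧
    (∀ Q : ModuleCat.{0} R, Module.Projective R Q →
      LinearMap.range (LinearMap.lcomp R Q f) = LinearMap.ker (LinearMap.lcomp R Q f)) ∧
    Nonempty (M ≃ₗ[R] LinearMap.range f)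

/-- Gorenstein projective: there is a complete projective resolution, i.e. an exact complex
`⋯ → P_i →^{d_i} P_{i+1} → ⋯` of projective modules which stays exact after applying
`Hom(-, Q)` for every projective `Q`, with `M` isomorphic to one of the images. -/
def IsGP (R : Type) [CommRing R] (M : Type) [AddCommGroup M] [Module R M] : Prop :=
  ∃ (P : ℤ → ModuleCat.{0} R) (d : ∀ i, P i →ₗ[R] P (i + 1)),
    (∀ i, Module.Projective R (P i)) ∧
    (∀ i, LinearMap.range (d i) = LinearMap.ker (d (i + 1))) ∧
    (∀ (Q : ModuleCat.{0} R), Module.Projective R Q → ∀ i,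
      LinearMap.range (LinearMap.lcomp R Q (d (i + 1))) =
        LinearMap.ker (LinearMap.lcomp R Q (d i))) ∧
    ∃ i, Nonempty (M ≃ₗ[R] LinearMap.range (d i))

/-- `ResLen R C n M` : `M` admits a resolution `0 → G_n → ⋯ → G_0 → M → 0`
where each `G_j` satisfies the predicate `C`. -/
def ResLen (R : Type) [CommRing R] (C : ModuleCat.{0} R → Prop) :
    ℕ → ModuleCat.{0} R → Prop
  | 0, M => C M
  | n + 1, M => ∃ (G : ModuleCat.{0} R) (g : G →ₗ[R] M), C G ∧ Function.Surjective g ∧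
      ResLen R C n (ModuleCat.of R (LinearMap.ker g))

/-- The projective dimension of `M`, as an element of `ℕ∞`. -/
noncomputable def pdim (R : Type) [CommRing R] (M : Type) [AddCommGroup M] [Module R M] : ℕ∞ :=
  sInf {c : ℕ∞ | ∃ n : ℕ, c = n ∧
    ResLen R (fun P => Module.Projective R P) n (ModuleCat.of R M)}

/-- The Gorenstein projective dimension of `M`, as an element of `ℕ∞`. -/
noncomputable def Gpdim (R : Type) [CommRing R] (M : Type) [AddCommGroup M] [Module R M] : ℕ∞ :=
  sInf {c : ℕ∞ | ∃ n : ℕ, c = n ∧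
    ResLen R (fun G => IsGP R G) n (ModuleCat.of R M)}

/-- `M` admits a finite `n`-presentation: an exact sequence
`F_n → ⋯ → F_0 → M → 0` with each `F_i` finitely generated free. -/
def NPres (R : Type) [CommRing R] : ℕ → ModuleCat.{0} R → Prop
  | 0, M => ∃ (F : ModuleCat.{0} R) (g : F →ₗ[R] M),
      Module.Free R F ∧ Module.Finite R F ∧ Function.Surjective g
  | n + 1, M => ∃ (F : ModuleCat.{0} R) (g : F →ₗ[R] M),
      Module.Free R F ∧ Module.Finite R F ∧ Function.Surjective g ∧
      NPres R n (ModuleCat.of R (LinearMap.ker g))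

section AuxSGP
variable {R : Type} [CommRing R]

/-- A surjection onto the source of a retraction splits. -/
lemma splitEquiv {X P : Type} [AddCommGroup X] [Module R X] [AddCommGroup P]
    [Module R P] [Module.Projective R P] (f : X →ₗ[R] P) (hf : Function.Surjective f) :
    Nonempty (X ≃ₗ[R] (LinearMap.ker f × P)) := by
  obtain ⟨s, hs⟩ := Module.projective_lifting_property f LinearMap.id hf
  exact ⟨((LinearMap.exact_subtype_ker_map f).splitSurjectiveEquiv
    (Submodule.injective_subtype _) ⟨s, hs⟩).1⟩

/-- Schanuel's lemma. -/
lemma schanuel {M P G : Type} [AddCommGroup M] [Module R M] [AddCommGroup P] [Module R P]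
    [AddCommGroup G] [Module R G] [Module.Projective R P] [Module.Projective R G]
    (p : P →ₗ[R] M) (g : G →ₗ[R] M) (hp : Function.Surjective p) (hg : Function.Surjective g) :
    Nonempty ((LinearMap.ker p × G) ≃ₗ[R] (LinearMap.ker g × P)) := by
  set X : Submodule R (P × G) :=
    LinearMap.ker (p.comp (LinearMap.fst R P G) - g.comp (LinearMap.snd R P G)) with hX
  have memX : ∀ z : P × G, z ∈ X ↔ p z.1 = g z.2 := by
    intro z; simp [hX, LinearMap.mem_ker, sub_eq_zero]
  set πG : X →ₗ[R] G := (LinearMap.snd R P G).comp X.subtype with hπG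
  set πP : X →ₗ[R] P := (LinearMap.fst R P G).comp X.subtype with hπP
  have hsG : Function.Surjective πG := by
    intro y
    obtain ⟨x, hx⟩ := hp (g y)
    exact ⟨⟨(x, y), (memX _).2 hx⟩, rfl⟩
  have hsP : Function.Surjective πP := by
    intro x
    obtain ⟨y, hy⟩ := hg (p x)
    exact ⟨⟨(x, y), (memX _).2 hy.symm⟩, rfl⟩
  have eG : LinearMap.ker πG ≃ₗ[R] LinearMap.ker p := by
    refine
      { toFun := fun z => ⟨(z.1.1 : P × G).1, ?_⟩
        map_add' := fun a b => rfl
        map_smul' := fun c a => rfl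
        invFun := fun k => ⟨⟨(k.1, 0), (memX _).2 (by simp [k.2])⟩, rfl⟩
        left_inv := ?_
        right_inv := fun k => rfl }
    · have h2 : (z.1.1 : P × G).2 = 0 := z.2
      have h1 := (memX _).1 z.1.2
      simpa [LinearMap.mem_ker, h2] using h1
    · rintro ⟨⟨⟨a, b⟩, hab⟩, hz⟩
      have : b = 0 := hz
      subst this
      rfl
  have eP : LinearMap.ker πP ≃ₗ[R] LinearMap.ker g := by
    refine
      { toFun := fun z => ⟨(z.1.1 : P × G).2, ?_⟩
        map_add' := fun a b => rfl
        map_smul' := fun c a => rfl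
        invFun := fun k => ⟨⟨(0, k.1), (memX _).2 (by simp [k.2])⟩, rfl⟩
        left_inv := ?_
        right_inv := fun k => rfl }
    · have h1 : (z.1.1 : P × G).1 = 0 := z.2
      have h := (memX _).1 z.1.2
      simpa [LinearMap.mem_ker, h1] using h.symm
    · rintro ⟨⟨⟨a, b⟩, hab⟩, hz⟩
      have : a = 0 := hz
      subst this
      rfl
  obtain ⟨e1⟩ := splitEquiv πG hsG
  obtain ⟨e2⟩ := splitEquiv πP hsP
  exact ⟨((eG.symm.prodCongr (LinearEquiv.refl R G)).trans e1.symm).trans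
    (e2.trans (eP.prodCongr (LinearEquiv.refl R P)))⟩


variable {R : Type} [CommRing R]

lemma resLen_congr (n : ℕ) :
    ∀ (N N' : ModuleCat.{0} R) (_ : N ≃ₗ[R] N'),
      ResLen R (fun P => Module.Projective R P) n N →
      ResLen R (fun P => Module.Projective R P) n N' := by
  induction n with
  | zero =>
    intro N N' e h
    haveI : Module.Projective R N := h
    exact Module.Projective.of_equiv e
  | succ n ih =>
    rintro N N' e ⟨G, g, hG, hsurj, hres⟩
    refine ⟨G, e.toLinearMap.comp g, hG, e.surjective.comp hsurj, ?_⟩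
    rwa [show LinearMap.ker (e.toLinearMap.comp g) = LinearMap.ker g from
      LinearMap.ker_comp_of_ker_eq_bot _ e.ker]

lemma resLen_prod (n : ℕ) :
    ∀ (N : ModuleCat.{0} R) (Q : Type) [AddCommGroup Q] [Module R Q]
      [Module.Projective R Q],
      ResLen R (fun P => Module.Projective R P) n N →
      ResLen R (fun P => Module.Projective R P) n (ModuleCat.of R (N × Q)) := by
  induction n with
  | zero =>
    intro N Q _ _ _ h
    haveI : Module.Projective R N := h
    exact inferInstanceAs (Module.Projective R (N × Q))
  | succ n _ =>
    rintro N Q _ _ _ ⟨G, g, hG, hsurj, hres⟩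
    haveI : Module.Projective R G := hG
    refine ⟨ModuleCat.of R (G × Q), g.prodMap LinearMap.id,
      inferInstanceAs (Module.Projective R (G × Q)),
      fun z => ?_, ?_⟩
    · obtain ⟨x, hx⟩ := hsurj z.1
      exact ⟨(x, z.2), Prod.ext hx rfl⟩
    have eK : (LinearMap.ker g) ≃ₗ[R]
        (LinearMap.ker (g.prodMap (LinearMap.id : Q →ₗ[R] Q))) := by
      refine
        { toFun := fun k => ⟨(k.1, 0), show (g (k.1 : G), (0 : Q)) = ((0 : N), (0 : Q)) by
            simp [k.2]⟩
          map_add' := fun a b => by apply Subtype.ext; simp [Prod.ext_iff]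
          map_smul' := fun c a => by apply Subtype.ext; simp [Prod.ext_iff]
          invFun := fun z => ⟨z.1.1, by
            have h : (g z.1.1, z.1.2) = ((0 : N), (0 : Q)) := z.2
            exact (Prod.ext_iff.mp h).1⟩
          left_inv := fun k => rfl
          right_inv := ?_ }
      rintro ⟨⟨a, b⟩, hz⟩
      have h : (g a, b) = ((0 : N), (0 : Q)) := hz
      have hb : b = 0 := (Prod.ext_iff.mp h).2
      subst hb
      rfl
    refine resLen_congr n _ _ ?_ hres
    exact eK
set_option synthInstance.maxHeartbeats 1000000 in
lemma sgp_key (n : ℕ) :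
    ∀ (M P : Type) [AddCommGroup M] [Module R M] [AddCommGroup P] [Module R P],
      Module.Projective R P → ∀ (i : M →ₗ[R] P) (p : P →ₗ[R] M),
      Function.Injective i → Function.Surjective p →
      LinearMap.range i = LinearMap.ker p →
      ResLen R (fun P => Module.Projective R P) n (ModuleCat.of R M) →
      Module.Projective R M := by
  induction n with
  | zero => intro M P _ _ _ _ _ i p _ _ _ h; exact h
  | succ n ih =>
    intro M P _ _ _ _ hP i p hi hp hexact h
    obtain ⟨G, g, hG, hgs, hres⟩ := h
    haveI : Module.Projective R P := hP
    haveI : Module.Projective R G := hG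
    have e1 : M ≃ₗ[R] LinearMap.ker p :=
      (LinearEquiv.ofInjective i hi).trans (LinearEquiv.ofEq _ _ hexact)
    obtain ⟨e2⟩ := schanuel p g hp hgs
    have h1 := resLen_prod n _ P hres
    have h2 : ResLen R (fun P => Module.Projective R P) n (ModuleCat.of R (M × G)) := by
      refine resLen_congr n _ _ ?_ h1
      exact ((e1.prodCongr (LinearEquiv.refl R ↥G)).trans e2).symm
    set i' : M × ↥G →ₗ[R] P × (↥G × ↥G) := i.prodMap (LinearMap.inl R ↥G ↥G) with hi'
    set p' : P × (↥G × ↥G) →ₗ[R] M × ↥G := p.prodMap (LinearMap.snd R ↥G ↥G) with hp'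
    have hmem : ∀ x : P, (∃ m, i m = x) ↔ p x = 0 := by
      intro x
      rw [show (∃ m, i m = x) ↔ x ∈ LinearMap.range i from Iff.rfl, hexact,
        LinearMap.mem_ker]
    haveI hGG : Module.Projective R (↥G × ↥G) := Module.instProjectiveProd
    haveI hPGG : Module.Projective R (P × (↥G × ↥G)) := Module.instProjectiveProd
    have hproj : Module.Projective R (M × ↥G) := by
      refine ih (M × ↥G) (P × (↥G × ↥G)) hPGG i' p' ?_ ?_ ?_ h2
      · intro a b hab
        have h1' := (Prod.ext_iff.mp hab).1
        have h2' := (Prod.ext_iff.mp ((Prod.ext_iff.mp hab).2)).1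
        exact Prod.ext (hi h1') h2'
      · intro z
        obtain ⟨x, hx⟩ := hp z.1
        exact ⟨(x, (0, z.2)), Prod.ext hx rfl⟩
      · ext z
        obtain ⟨x, a, b⟩ := z
        simp only [LinearMap.mem_range, LinearMap.mem_ker]
        constructor
        · rintro ⟨⟨m, c⟩, hmc⟩
          have h1' : i m = x := (Prod.ext_iff.mp hmc).1
          have h2' : ((c : ↥G), (0 : ↥G)) = (a, b) := (Prod.ext_iff.mp hmc).2
          have hb : b = 0 := ((Prod.ext_iff.mp h2').2).symm
          have hx0 : p x = 0 := (hmem x).1 ⟨m, h1'⟩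
          show (p x, b) = (0, 0)
          rw [hx0, hb]
        · intro hz
          have hz' : (p x, b) = ((0 : M), (0 : ↥G)) := hz
          obtain ⟨m, hm⟩ := (hmem x).2 (Prod.ext_iff.mp hz').1
          have hb : b = 0 := (Prod.ext_iff.mp hz').2
          refine ⟨(m, a), ?_⟩
          show (i m, ((a : ↥G), (0 : ↥G))) = (x, (a, b))
          rw [hm, hb]
    exact Module.Projective.of_split (LinearMap.inl R M ↥G) (LinearMap.fst R M ↥G)
      (by ext x; rfl)
end AuxSGP

/-- if `M` fits into a short exact sequence `0 → M → P → M → 0` with `P`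
projective and `M` has finite projective dimension, then `M` is projective. -/
theorem stmt15 (R : Type) [CommRing R] (M : Type) [AddCommGroup M] [Module R M]
    (P : Type) [AddCommGroup P] [Module R P] (hP : Module.Projective R P)
    (i : M →ₗ[R] P) (p : P →ₗ[R] M)
    (hi : Function.Injective i) (hp : Function.Surjective p)
    (hexact : LinearMap.range i = LinearMap.ker p)
    (hfin : pdim R M < ⊤) : Module.Projective R M := by
  rw [pdim] at hfin
  obtain ⟨c, hc, -⟩ := sInf_lt_iff.mp hfin
  obtain ⟨n, rfl, hres⟩ := hc
  exact sgp_key n M P hP i p hi hp hexact hres
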